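/- Let C₁ and C₂ be real symmetric N×N matrices, where C₁ is invertible, and suppose C₂ has at most d nonzero eigenvalues. Denote by λ₁(C₁), …, λ_N(C₁) the eigenvalues of C₁ ordered so that |λ₁(C₁)| ≤ … ≤ |λ_N(C₁)|, and let μ be the maximum absolute value of the eigenvalues of C₂. Then |det(C₁ + C₂)| ≤ |det(C₁)| · ∏_{j=1}^{d} (1 + μ/|λ_j(C₁)|). -/

import Mathlib

open Submodule Module

section Aux

variable {N : ℕ}

/-- representation of elements of span of a finite subfamily -/
lemma aux_rep {V : Type*} [AddCommGroup V] [Module ℝ V] (w : Fin N → V)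
    (s : Finset (Fin N)) {x : V} (hx : x ∈ Submodule.span ℝ (w '' ↑s)) :
    ∃ c : Fin N → ℝ, x = ∑ i ∈ s, c i • w i := by
  induction hx using Submodule.span_induction with
  | mem y hy =>
    obtain ⟨i, hi, rfl⟩ := hy
    refine ⟨fun j => if j = i then 1 else 0, ?_⟩
    simp only [ite_smul, one_smul, zero_smul]
    have hi' : i ∈ s := by exact_mod_cast hi
    rw [Finset.sum_ite_eq' s i (fun j => w j), if_pos hi']
  | zero => exact ⟨0, by simp⟩
  | add x y hx hy ihx ihy =>
    obtain ⟨c, hc⟩ := ihx; obtain ⟨c', hc'⟩ := ihy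
    exact ⟨c + c', by simp [hc, hc', add_smul, Finset.sum_add_distrib]⟩
  | smul a x hx ihx =>
    obtain ⟨c, hc⟩ := ihx
    exact ⟨a • c, by simp [hc, Finset.smul_sum, smul_smul]⟩

lemma aux_pythagoras {V : Type*} [NormedAddCommGroup V] [InnerProductSpace ℝ V]
    {w : Fin N → V} (hw : Orthonormal ℝ w) (s : Finset (Fin N)) (c : Fin N → ℝ) :
    ‖∑ i ∈ s, c i • w i‖ ^ 2 = ∑ i ∈ s, (c i) ^ 2 := by
  rw [← real_inner_self_eq_norm_sq, hw.inner_sum]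
  simp [sq]

lemma aux_le_of_sq {a b : ℝ} (ha : 0 ≤ a) (hb : 0 ≤ b) (h : a ^ 2 ≤ b ^ 2) : a ≤ b := by
  nlinarith

lemma aux_upper {V : Type*} [NormedAddCommGroup V] [InnerProductSpace ℝ V]
    (T : V →ₗ[ℝ] V) {w : Fin N → V} (hw : Orthonormal ℝ w) {ev : Fin N → ℝ}
    (hT : ∀ i, T (w i) = ev i • w i) (s : Finset (Fin N)) {c : ℝ}
    (h : ∀ i ∈ s, |ev i| ≤ c) {x : V} (hx : x ∈ Submodule.span ℝ (w '' ↑s)) :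
    ‖T x‖ ≤ c * ‖x‖ := by
  obtain ⟨co, rfl⟩ := aux_rep w s hx
  have hTx : T (∑ i ∈ s, co i • w i) = ∑ i ∈ s, (co i * ev i) • w i := by
    rw [map_sum]
    exact Finset.sum_congr rfl fun i _ => by rw [map_smul, hT i, smul_smul]
  rw [hTx]
  have h1 : ‖∑ i ∈ s, (co i * ev i) • w i‖ ^ 2 ≤ (c * ‖∑ i ∈ s, co i • w i‖) ^ 2 := by
    rw [aux_pythagoras hw, mul_pow, aux_pythagoras hw, Finset.mul_sum]
    refine Finset.sum_le_sum fun i hi => ?_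
    have := h i hi
    calc (co i * ev i) ^ 2 = (ev i)^2 * (co i)^2 := by ring
    _ ≤ c^2 * (co i)^2 := by
        apply mul_le_mul_of_nonneg_right _ (sq_nonneg _)
        calc (ev i)^2 = |ev i|^2 := (sq_abs _).symm
        _ ≤ c^2 := by exact pow_le_pow_left₀ (abs_nonneg _) this 2
  have h2 : 0 ≤ c * ‖∑ i ∈ s, co i • w i‖ := by
    rcases s.eq_empty_or_nonempty with rfl | ⟨i, hi⟩
    · simp
    · exact mul_nonneg (le_trans (abs_nonneg _) (h i hi)) (norm_nonneg _)
  exact aux_le_of_sq (norm_nonneg _) h2 h1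

lemma aux_lower {V : Type*} [NormedAddCommGroup V] [InnerProductSpace ℝ V]
    (T : V →ₗ[ℝ] V) {w : Fin N → V} (hw : Orthonormal ℝ w) {ev : Fin N → ℝ}
    (hT : ∀ i, T (w i) = ev i • w i) (s : Finset (Fin N)) {c : ℝ} (hc : 0 ≤ c)
    (h : ∀ i ∈ s, c ≤ |ev i|) {x : V} (hx : x ∈ Submodule.span ℝ (w '' ↑s)) :
    c * ‖x‖ ≤ ‖T x‖ := by
  obtain ⟨co, rfl⟩ := aux_rep w s hx
  have hTx : T (∑ i ∈ s, co i • w i) = ∑ i ∈ s, (co i * ev i) • w i := by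
    rw [map_sum]
    exact Finset.sum_congr rfl fun i _ => by rw [map_smul, hT i, smul_smul]
  rw [hTx]
  have h1 : (c * ‖∑ i ∈ s, co i • w i‖) ^ 2 ≤ ‖∑ i ∈ s, (co i * ev i) • w i‖ ^ 2 := by
    rw [aux_pythagoras hw, mul_pow, aux_pythagoras hw, Finset.mul_sum]
    refine Finset.sum_le_sum fun i hi => ?_
    calc c^2 * (co i)^2 ≤ |ev i|^2 * (co i)^2 :=
          mul_le_mul_of_nonneg_right (pow_le_pow_left₀ hc (h i hi) 2) (sq_nonneg _)
    _ = (co i * ev i)^2 := by rw [sq_abs]; ring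
  exact aux_le_of_sq (mul_nonneg hc (norm_nonneg _)) (norm_nonneg _) h1

lemma aux_finrank_span {V : Type*} [NormedAddCommGroup V] [InnerProductSpace ℝ V]
    {w : Fin N → V} (hw : Orthonormal ℝ w) (s : Finset (Fin N)) :
    finrank ℝ (Submodule.span ℝ (w '' ↑s)) = s.card := by
  have li : LinearIndependent ℝ (w ∘ ((↑) : {x // x ∈ s} → Fin N)) :=
    (hw.comp _ Subtype.val_injective).linearIndependent
  have := finrank_span_eq_card li
  rwa [Set.range_comp, Subtype.range_coe_subtype, Finset.setOf_mem, Fintype.card_coe] at this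

lemma aux_inf_ne_bot {V : Type*} [NormedAddCommGroup V] [InnerProductSpace ℝ V]
    [FiniteDimensional ℝ V] (p q : Submodule ℝ V)
    (h : finrank ℝ V < finrank ℝ p + finrank ℝ q) :
    ∃ x, x ∈ p ∧ x ∈ q ∧ x ≠ 0 := by
  have hs := Submodule.finrank_sup_add_finrank_inf_eq p q
  have hle : finrank ℝ ↥(p ⊔ q) ≤ finrank ℝ V := Submodule.finrank_le _
  have hpos : 0 < finrank ℝ ↥(p ⊓ q) := by omega
  have : p ⊓ q ≠ ⊥ := by
    intro hb
    rw [hb, finrank_bot] at hpos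
    omega
  obtain ⟨x, hx, hx0⟩ := (Submodule.ne_bot_iff _).mp this
  exact ⟨x, hx.1, hx.2, hx0⟩

lemma aux_finrank_comap {V : Type*} [NormedAddCommGroup V] [InnerProductSpace ℝ V]
    [FiniteDimensional ℝ V] (f : V →ₗ[ℝ] V) (W : Submodule ℝ V) :
    finrank ℝ W ≤ finrank ℝ (W.comap f) := by
  set p := W.comap f with hp
  have hker : LinearMap.ker f ≤ p := fun x hx => by
    simp only [hp, Submodule.mem_comap, LinearMap.mem_ker.mp hx]
    exact W.zero_mem
  have h1 := LinearMap.finrank_range_add_finrank_ker (f.domRestrict p)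
  have hrange : LinearMap.range (f.domRestrict p) = Submodule.map f p := by
    ext y; simp [LinearMap.mem_range, Submodule.mem_map]
  have hmap : Submodule.map f p = LinearMap.range f ⊓ W := Submodule.map_comap_eq f W
  have hkerd : finrank ℝ (LinearMap.ker (f.domRestrict p)) = finrank ℝ (LinearMap.ker f) := by
    rw [LinearMap.ker_domRestrict]
    exact (Submodule.comapSubtypeEquivOfLe hker).finrank_eq
  rw [hrange, hmap, hkerd] at h1
  have h2 := Submodule.finrank_sup_add_finrank_inf_eq (LinearMap.range f) W
  have h3 := LinearMap.finrank_range_add_finrank_ker f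
  have h4 : finrank ℝ ↥(LinearMap.range f ⊔ W) ≤ finrank ℝ V := Submodule.finrank_le _
  have h5 : finrank ℝ ↥p ≤ finrank ℝ V := Submodule.finrank_le _
  omega

lemma aux_card_ge (N k : ℕ) :
    N - k ≤ (Finset.univ.filter fun i : Fin N => k ≤ (i : ℕ)).card := by
  classical
  have h1 := Finset.card_filter_add_card_filter_not
    (s := (Finset.univ : Finset (Fin N))) (fun i : Fin N => k ≤ (i : ℕ))
  have h2 : (Finset.univ.filter fun i : Fin N => ¬ k ≤ (i : ℕ)).card ≤ k := by
    have hmaps : ∀ i ∈ (Finset.univ.filter fun i : Fin N => ¬ k ≤ (i : ℕ)),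
        (i : ℕ) ∈ Finset.range k := by
      intro i hi
      simp only [Finset.mem_filter, not_le] at hi
      simp [hi.2]
    have := Finset.card_le_card_of_injOn (fun i : Fin N => (i : ℕ)) hmaps
      (fun a _ b _ hab => Fin.val_injective hab)
    simpa using this
  rw [Finset.card_univ, Fintype.card_fin] at h1
  omega

lemma aux_normsq {N : ℕ} (x : EuclideanSpace ℝ (Fin N)) : ‖x‖ ^ 2 = ∑ i, (x i) ^ 2 := by
  rw [EuclideanSpace.norm_eq, Real.sq_sqrt (by positivity)]
  simp [sq_abs]

lemma aux_prod_mono {α : Type*} [DecidableEq α] {s t : Finset α} (hsub : s ⊆ t) (f : α → ℝ)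
    (hf : ∀ i ∈ t, 1 ≤ f i) : ∏ i ∈ s, f i ≤ ∏ i ∈ t, f i := by
  rw [← Finset.prod_sdiff hsub]
  have h1 : (1:ℝ) ≤ ∏ i ∈ t \ s, f i := by
    have := Finset.prod_le_prod (s := t \ s) (f := fun _ => (1:ℝ)) (g := f)
      (fun i _ => zero_le_one) (fun i hi => hf i (Finset.mem_sdiff.mp hi).1)
    simpa using this
  have h2 : 0 ≤ ∏ i ∈ s, f i :=
    Finset.prod_nonneg (fun i hi => le_trans zero_le_one (hf i (hsub hi)))
  nlinarith

end Aux
set_option maxHeartbeats 1000000 in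
open Finset in
theorem stmt_4 (N : ℕ) (hN : 0 < N) (C₁ C₂ : Matrix (Fin N) (Fin N) ℝ)
    (h1 : C₁.IsHermitian) (h2 : C₂.IsHermitian) (hinv : IsUnit C₁.det)
    (σ : Equiv.Perm (Fin N))
    (hσ : Monotone fun j => |h1.eigenvalues (σ j)|)
    (d : ℕ) (hd : d ≤ N)
    (hcount : (Finset.univ.filter fun j => h2.eigenvalues j ≠ 0).card ≤ d)
    (μ : ℝ)
    (hμ : μ = Finset.univ.sup' (Finset.univ_nonempty_iff.mpr (Fin.pos_iff_nonempty.mp hN)) fun j => |h2.eigenvalues j|) :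
    |(C₁ + C₂).det| ≤ |C₁.det| *
      ∏ j ∈ Finset.univ.filter (fun j : Fin N => (j : ℕ) < d),
        (1 + μ / |h1.eigenvalues (σ j)|) := by
  classical
  -- basic facts
  have hdet1 : C₁.det ≠ 0 := by
    intro h0
    rw [h0] at hinv
    exact (by simp : ¬ IsUnit (0:ℝ)) hinv
  have hlam1 : ∀ i, h1.eigenvalues i ≠ 0 := by
    intro i h0
    apply hdet1
    rw [h1.det_eq_prod_eigenvalues]
    exact Finset.prod_eq_zero (Finset.mem_univ i) (by exact_mod_cast h0)
  have habs1 : ∀ i, (0:ℝ) < |h1.eigenvalues i| := fun i => abs_pos.mpr (hlam1 i)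
  have hμ2 : ∀ i, |h2.eigenvalues i| ≤ μ := by
    intro i
    rw [hμ]
    exact Finset.le_sup' (fun j => |h2.eigenvalues j|) (Finset.mem_univ i)
  have hμ0 : 0 ≤ μ := le_trans (abs_nonneg _) (hμ2 ⟨0, hN⟩)
  -- conjugation setup
  set Uc : Matrix (Fin N) (Fin N) ℝ := ↑(h2.eigenvectorUnitary) with hUcdef
  have hUmem : Uc ∈ unitary (Matrix (Fin N) (Fin N) ℝ) := h2.eigenvectorUnitary.2
  have hU1 : star Uc * Uc = 1 := (Unitary.mem_iff.mp hUmem).1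
  have hU2 : Uc * star Uc = 1 := (Unitary.mem_iff.mp hUmem).2
  have conj_eq : ∀ X : Matrix (Fin N) (Fin N) ℝ, star Uc * (Uc * X * star Uc) * Uc = X := by
    intro X
    calc star Uc * (Uc * X * star Uc) * Uc = (star Uc * Uc) * (X * (star Uc * Uc)) := by
          simp only [Matrix.mul_assoc]
      _ = X := by rw [hU1]; simp
  set D := Matrix.diagonal (h2.eigenvalues) with hDdef
  have hC2 : star Uc * C₂ * Uc = D := by
    conv_lhs => rw [h2.spectral_theorem]
    exact conj_eq _
  set A := star Uc * C₁ * Uc with hAdef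
  have hApC : star Uc * (C₁ + C₂) * Uc = A + D := by
    rw [Matrix.mul_add, Matrix.add_mul, hC2]
  have hdet_conj : ∀ X : Matrix (Fin N) (Fin N) ℝ, (star Uc * X * Uc).det = X.det := by
    intro X
    rw [Matrix.det_mul, Matrix.det_mul]
    have hUU : Uc.det * (star Uc).det = 1 := by
      rw [← Matrix.det_mul, hU2, Matrix.det_one]
    calc (star Uc).det * X.det * Uc.det = X.det * (Uc.det * (star Uc).det) := by ring
    _ = X.det := by rw [hUU, mul_one]
  have hdetA : A.det = C₁.det := hdet_conj C₁
  have hAunit : IsUnit A.det := by rw [hdetA]; exact hinv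
  have hAh : A.IsHermitian := by
    have := Matrix.isHermitian_mul_mul_conjTranspose (star Uc) h1
    rwa [Matrix.star_eq_conjTranspose, Matrix.conjTranspose_conjTranspose] at this
  have hAinvA : A⁻¹ * A = 1 := Matrix.nonsing_inv_mul _ hAunit
  have hAAinv : A * A⁻¹ = 1 := Matrix.mul_nonsing_inv _ hAunit
  -- E', S, G
  set E' := Matrix.diagonal (fun i => √|h2.eigenvalues i|) with hE'def
  set S := Matrix.diagonal (fun i : Fin N => if h2.eigenvalues i < 0 then (-1:ℝ) else 1) with hSdef
  have hSS : S * S = 1 := by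
    rw [hSdef, Matrix.diagonal_mul_diagonal]
    have : (fun i : Fin N => (if h2.eigenvalues i < 0 then (-1:ℝ) else 1) *
        (if h2.eigenvalues i < 0 then (-1:ℝ) else 1)) = fun _ => 1 := by
      funext i
      by_cases h : h2.eigenvalues i < 0 <;> simp [h]
    rw [this, Matrix.diagonal_one]
  have hESE : E' * S * E' = D := by
    rw [hE'def, hSdef, hDdef, Matrix.diagonal_mul_diagonal, Matrix.diagonal_mul_diagonal]
    apply congrArg Matrix.diagonal
    funext i
    show (√|h2.eigenvalues i| * (if h2.eigenvalues i < 0 then (-1:ℝ) else 1))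
        * √|h2.eigenvalues i| = h2.eigenvalues i
    have hs := Real.mul_self_sqrt (abs_nonneg (h2.eigenvalues i))
    by_cases h : h2.eigenvalues i < 0
    · rw [if_pos h]
      have habs2 : |h2.eigenvalues i| = -h2.eigenvalues i := abs_of_neg h
      nlinarith [hs, habs2]
    · rw [if_neg h]
      have habs2 : |h2.eigenvalues i| = h2.eigenvalues i := abs_of_nonneg (not_lt.mp h)
      nlinarith [hs, habs2]
  set G := S + E' * A⁻¹ * E' with hGdef
  have hGh : G.IsHermitian := by
    apply Matrix.IsHermitian.add
    · exact Matrix.isHermitian_diagonal _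
    · have hE'h : E'.conjTranspose = E' := (Matrix.isHermitian_diagonal _)
      have := Matrix.isHermitian_mul_mul_conjTranspose E' hAh.inv
      rwa [hE'h] at this
  -- determinant identity
  have hdetS : |S.det| = 1 := by
    rw [hSdef, Matrix.det_diagonal, Finset.abs_prod]
    rw [Finset.prod_eq_one]
    intro i _
    by_cases h : h2.eigenvalues i < 0 <;> simp [h]
  have hfact : A + D = A * (1 + A⁻¹ * D) := by
    rw [Matrix.mul_add, mul_one, ← Matrix.mul_assoc, hAAinv, one_mul]
  have hdetG : (1 + A⁻¹ * D).det = G.det * S.det := by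
    have h1' : (1 : Matrix (Fin N) (Fin N) ℝ) + A⁻¹ * D = 1 + (A⁻¹ * E' * S) * E' := by
      rw [← hESE]; simp only [Matrix.mul_assoc]
    rw [h1', Matrix.det_one_add_mul_comm]
    have h2' : (1 : Matrix (Fin N) (Fin N) ℝ) + E' * (A⁻¹ * E' * S) = G * S := by
      rw [hGdef, Matrix.add_mul, hSS]
      simp only [Matrix.mul_assoc]
    rw [h2', Matrix.det_mul]
  have hdet_main : |(C₁ + C₂).det| = |C₁.det| * |G.det| := by
    have h0 : (C₁ + C₂).det = A.det * ((1 + A⁻¹ * D).det) := by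
      rw [← hdet_conj (C₁ + C₂), hApC, hfact, Matrix.det_mul]
    rw [h0, hdetG, hdetA, abs_mul, abs_mul, hdetS, mul_one]
  -- linear maps
  have hTmul : ∀ (M M' : Matrix (Fin N) (Fin N) ℝ) (x : EuclideanSpace ℝ (Fin N)),
      Matrix.toEuclideanLin (M * M') x = Matrix.toEuclideanLin M (Matrix.toEuclideanLin M' x) := by
    intro M M' x
    simp [Matrix.toEuclideanLin_apply, Matrix.mulVec_mulVec]
  have hT1 : ∀ x : EuclideanSpace ℝ (Fin N),
      Matrix.toEuclideanLin (1 : Matrix (Fin N) (Fin N) ℝ) x = x := by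
    intro x
    simp [Matrix.toEuclideanLin_apply]
  set TG := Matrix.toEuclideanLin G with hTGdef
  set TAi := Matrix.toEuclideanLin A⁻¹ with hTAidef
  set TE := Matrix.toEuclideanLin E' with hTEdef
  set TS := Matrix.toEuclideanLin S with hTSdef
  have hTGx : ∀ x : EuclideanSpace ℝ (Fin N), TG x = TS x + TE (TAi (TE x)) := by
    intro x
    rw [hTGdef, hGdef, map_add, LinearMap.add_apply, hTSdef]
    congr 1
    rw [show E' * A⁻¹ * E' = (E' * A⁻¹) * E' from rfl, hTmul, hTmul, hTEdef, hTAidef]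
  -- coordinates of diagonal actions
  have hcoord : ∀ (v : Fin N → ℝ) (x : EuclideanSpace ℝ (Fin N)) (i : Fin N),
      (Matrix.toEuclideanLin (Matrix.diagonal v) x) i = v i * x i := by
    intro v x i
    simp [Matrix.toEuclideanLin_apply, Matrix.mulVec_diagonal]
  have hTSnorm : ∀ x : EuclideanSpace ℝ (Fin N), ‖TS x‖ = ‖x‖ := by
    intro x
    rw [EuclideanSpace.norm_eq, EuclideanSpace.norm_eq]
    congr 1
    apply Finset.sum_congr rfl
    intro i _
    rw [hTSdef, hSdef, hcoord]
    have : |(if h2.eigenvalues i < 0 then (-1:ℝ) else 1)| = 1 := by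
      by_cases h : h2.eigenvalues i < 0 <;> simp [h]
    rw [Real.norm_eq_abs, Real.norm_eq_abs, abs_mul, this, one_mul]
  have hTEnorm : ∀ x : EuclideanSpace ℝ (Fin N), ‖TE x‖ ≤ √μ * ‖x‖ := by
    intro x
    have hsq : ‖TE x‖ ^ 2 ≤ (√μ * ‖x‖) ^ 2 := by
      rw [aux_normsq (TE x), mul_pow, Real.sq_sqrt hμ0, aux_normsq x, Finset.mul_sum]
      apply Finset.sum_le_sum
      intro i _
      rw [hTEdef, hE'def, hcoord, mul_pow]
      have he2 : (√|h2.eigenvalues i|) ^ 2 ≤ μ := by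
        rw [Real.sq_sqrt (abs_nonneg _)]
        exact hμ2 i
      exact mul_le_mul_of_nonneg_right he2 (sq_nonneg _)
    exact aux_le_of_sq (norm_nonneg _) (by positivity) hsq
  -- eigenvectors of A⁻¹
  set w : Fin N → EuclideanSpace ℝ (Fin N) :=
    fun i => Matrix.toEuclideanLin (star Uc) (h1.eigenvectorBasis i) with hwdef
  have hinner : ∀ a b : EuclideanSpace ℝ (Fin N),
      (inner ℝ (Matrix.toEuclideanLin (star Uc) a) (Matrix.toEuclideanLin (star Uc) b) : ℝ)
        = inner ℝ a b := by
    intro a b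
    rw [Matrix.star_eq_conjTranspose, Matrix.toEuclideanLin_conjTranspose_eq_adjoint,
        LinearMap.adjoint_inner_left]
    congr 1
    rw [← Matrix.toEuclideanLin_conjTranspose_eq_adjoint, ← hTmul,
        ← Matrix.star_eq_conjTranspose, hU2, hT1]
  have hwON : Orthonormal ℝ w := by
    rw [orthonormal_iff_ite]
    intro i j
    have horth := h1.eigenvectorBasis.orthonormal
    rw [orthonormal_iff_ite] at horth
    have heq : (inner ℝ (w i) (w j) : ℝ)
        = inner ℝ (h1.eigenvectorBasis i) (h1.eigenvectorBasis j) := hinner _ _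
    rw [heq]
    exact horth i j
  have hC1eig : ∀ i, Matrix.toEuclideanLin C₁ (h1.eigenvectorBasis i)
      = h1.eigenvalues i • h1.eigenvectorBasis i := by
    intro i
    apply (WithLp.equiv 2 (Fin N → ℝ)).injective
    simp only [WithLp.equiv_apply, Matrix.piLp_ofLp_toEuclideanLin, Matrix.toLin'_apply, WithLp.ofLp_smul]
    exact h1.mulVec_eigenvectorBasis i
  have hAeig : ∀ i, Matrix.toEuclideanLin A (w i) = h1.eigenvalues i • w i := by
    intro i
    have hUw : Matrix.toEuclideanLin Uc (w i) = h1.eigenvectorBasis i := by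
      show Matrix.toEuclideanLin Uc
        (Matrix.toEuclideanLin (star Uc) (h1.eigenvectorBasis i)) = _
      rw [← hTmul, hU2, hT1]
    calc Matrix.toEuclideanLin A (w i)
        = Matrix.toEuclideanLin (star Uc) (Matrix.toEuclideanLin C₁
            (Matrix.toEuclideanLin Uc (w i))) := by
          rw [hAdef, show star Uc * C₁ * Uc = star Uc * (C₁ * Uc) from by
            simp only [Matrix.mul_assoc], hTmul, hTmul]
      _ = Matrix.toEuclideanLin (star Uc) (h1.eigenvalues i • h1.eigenvectorBasis i) := by
          rw [hUw, hC1eig]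
      _ = h1.eigenvalues i • w i := by rw [map_smul, hwdef]
  have hAieig : ∀ i, TAi (w i) = (h1.eigenvalues i)⁻¹ • w i := by
    intro i
    have h0 : Matrix.toEuclideanLin A⁻¹ (Matrix.toEuclideanLin A (w i)) = w i := by
      rw [← hTmul, hAinvA, hT1]
    rw [hAeig i, map_smul] at h0
    rw [hTAidef]
    calc Matrix.toEuclideanLin A⁻¹ (w i)
        = (h1.eigenvalues i)⁻¹ • (h1.eigenvalues i • Matrix.toEuclideanLin A⁻¹ (w i)) := by
          rw [smul_smul, inv_mul_cancel₀ (hlam1 i), one_smul]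
      _ = (h1.eigenvalues i)⁻¹ • w i := by rw [h0]
  -- eigenvectors of G
  have hGeig : ∀ i, TG (hGh.eigenvectorBasis i) = hGh.eigenvalues i • hGh.eigenvectorBasis i := by
    intro i
    rw [hTGdef]
    apply (WithLp.equiv 2 (Fin N → ℝ)).injective
    simp only [WithLp.equiv_apply, Matrix.piLp_ofLp_toEuclideanLin, Matrix.toLin'_apply, WithLp.ofLp_smul]
    exact hGh.mulVec_eigenvectorBasis i
  -- sorting of G's eigenvalues
  set τ := Tuple.sort (fun i => |hGh.eigenvalues i|) with hτdef
  have hτmono : Monotone (fun k => |hGh.eigenvalues (τ k)|) := by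
    have hms := Tuple.monotone_sort (fun i => |hGh.eigenvalues i|)
    rw [hτdef]
    exact hms
  set t := Finset.univ.filter (fun j => h2.eigenvalues j ≠ 0) with htdef
  set r := t.card with hrdef
  have hrd : r ≤ d := hcount
  -- key eigenvalue bound
  have key : ∀ j : Fin N, |hGh.eigenvalues (τ j.rev)|
      ≤ (if (j:ℕ) < r then 1 + μ / |h1.eigenvalues (σ j)| else 1) := by
    intro j
    obtain ⟨V, hVdim, hVb⟩ : ∃ V : Submodule ℝ (EuclideanSpace ℝ (Fin N)),
        N - (j:ℕ) ≤ finrank ℝ V ∧ ∀ x ∈ V, ‖TG x‖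
          ≤ (if (j:ℕ) < r then 1 + μ / |h1.eigenvalues (σ j)| else 1) * ‖x‖ := by
      by_cases hjr : (j:ℕ) < r
      · refine ⟨Submodule.comap TE (Submodule.span ℝ
          (w '' ↑(Finset.image σ (Finset.univ.filter fun i' : Fin N => (j:ℕ) ≤ (i':ℕ))))), ?_, ?_⟩
        · calc N - (j:ℕ) ≤ (Finset.univ.filter fun i' : Fin N => (j:ℕ) ≤ (i':ℕ)).card :=
                aux_card_ge N j
            _ = (Finset.image σ (Finset.univ.filter fun i' : Fin N => (j:ℕ) ≤ (i':ℕ))).card :=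
                (Finset.card_image_of_injective _ σ.injective).symm
            _ = finrank ℝ (Submodule.span ℝ (w '' ↑(Finset.image σ
                  (Finset.univ.filter fun i' : Fin N => (j:ℕ) ≤ (i':ℕ))))) :=
                (aux_finrank_span hwON _).symm
            _ ≤ _ := aux_finrank_comap _ _
        · intro x hx
          rw [if_pos hjr]
          have hmem : TE x ∈ Submodule.span ℝ (w '' ↑(Finset.image σ
              (Finset.univ.filter fun i' : Fin N => (j:ℕ) ≤ (i':ℕ)))) :=
            Submodule.mem_comap.mp hx
          have hb1 : ‖TAi (TE x)‖ ≤ |h1.eigenvalues (σ j)|⁻¹ * ‖TE x‖ := by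
            refine aux_upper TAi hwON hAieig _ ?_ hmem
            intro i hi
            simp only [Finset.mem_image, Finset.mem_filter, Finset.mem_univ, true_and] at hi
            obtain ⟨i', hi', rfl⟩ := hi
            have hle : j ≤ i' := by
              rw [Fin.le_def]; exact hi'
            have hmono : |h1.eigenvalues (σ j)| ≤ |h1.eigenvalues (σ i')| := hσ hle
            rw [abs_inv]
            exact inv_anti₀ (habs1 _) hmono
          have hb2 : ‖TE x‖ ≤ √μ * ‖x‖ := hTEnorm x
          have hb3 : ‖TE (TAi (TE x))‖ ≤ √μ * ‖TAi (TE x)‖ := hTEnorm _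
          have hb4 : ‖TG x‖ ≤ ‖x‖ + ‖TE (TAi (TE x))‖ := by
            rw [hTGx x]
            calc ‖TS x + TE (TAi (TE x))‖ ≤ ‖TS x‖ + ‖TE (TAi (TE x))‖ := norm_add_le _ _
            _ = ‖x‖ + ‖TE (TAi (TE x))‖ := by rw [hTSnorm x]
          have hss : √μ * √μ = μ := Real.mul_self_sqrt hμ0
          calc ‖TG x‖ ≤ ‖x‖ + ‖TE (TAi (TE x))‖ := hb4
            _ ≤ ‖x‖ + √μ * (|h1.eigenvalues (σ j)|⁻¹ * ‖TE x‖) := by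
                refine add_le_add_right (le_trans hb3 (mul_le_mul_of_nonneg_left hb1
                  (Real.sqrt_nonneg μ))) _
            _ ≤ ‖x‖ + √μ * (|h1.eigenvalues (σ j)|⁻¹ * (√μ * ‖x‖)) := by
                refine add_le_add_right (mul_le_mul_of_nonneg_left
                  (mul_le_mul_of_nonneg_left hb2 (by positivity)) (Real.sqrt_nonneg μ)) _
            _ = (1 + μ / |h1.eigenvalues (σ j)|) * ‖x‖ := by
                rw [div_eq_mul_inv]
                calc ‖x‖ + √μ * (|h1.eigenvalues (σ j)|⁻¹ * (√μ * ‖x‖))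
                    = ‖x‖ + (√μ * √μ) * (|h1.eigenvalues (σ j)|⁻¹ * ‖x‖) := by ring
                  _ = (1 + μ * |h1.eigenvalues (σ j)|⁻¹) * ‖x‖ := by rw [hss]; ring
      · refine ⟨Submodule.span ℝ (⇑(EuclideanSpace.basisFun (Fin N) ℝ) '' ↑tᶜ), ?_, ?_⟩
        · rw [aux_finrank_span (EuclideanSpace.basisFun (Fin N) ℝ).orthonormal]
          rw [Finset.card_compl, Fintype.card_fin]
          push_neg at hjr
          omega
        · intro x hx
          rw [if_neg hjr]
          have hTEx : TE x = 0 := by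
            have hle : Submodule.span ℝ (⇑(EuclideanSpace.basisFun (Fin N) ℝ) '' ↑tᶜ)
                ≤ LinearMap.ker TE := by
              rw [Submodule.span_le]
              rintro y ⟨i, hi, rfl⟩
              simp only [SetLike.mem_coe, LinearMap.mem_ker]
              have hi0 : h2.eigenvalues i = 0 := by
                have : i ∉ t := by
                  simpa using hi
                rw [htdef] at this
                simpa using this
              have hz : E'.mulVec (Pi.single i 1) = 0 := by
                rw [Matrix.mulVec_single]
                funext k
                by_cases hk : k = i
                · subst hk
                  simp [hE'def, Matrix.diagonal_apply_eq, hi0]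
                · simp [hE'def, Matrix.diagonal_apply_ne _ hk, Pi.single_apply, hk]
              have hb : TE ((EuclideanSpace.basisFun (Fin N) ℝ) i)
                  = (WithLp.equiv 2 (Fin N → ℝ)).symm (E'.mulVec (Pi.single i 1)) := by
                rw [EuclideanSpace.basisFun_apply]
                rfl
              rw [hb, hz]
              rfl
            exact LinearMap.mem_ker.mp (hle hx)
          rw [hTGx x, hTEx, map_zero, map_zero, add_zero, hTSnorm x, one_mul]
    -- intersect with span of top eigenvectors of G
    set s' := Finset.image τ (Finset.univ.filter fun k : Fin N => ((j.rev : Fin N):ℕ) ≤ (k:ℕ))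
      with hs'def
    have hW'dim : (j:ℕ) + 1 ≤ finrank ℝ (Submodule.span ℝ (⇑hGh.eigenvectorBasis '' ↑s')) := by
      rw [aux_finrank_span hGh.eigenvectorBasis.orthonormal, hs'def,
        Finset.card_image_of_injective _ τ.injective]
      have hcard := aux_card_ge N ((j.rev : Fin N):ℕ)
      have hj := j.is_lt
      have hrev : ((j.rev : Fin N):ℕ) = N - ((j:ℕ) + 1) := Fin.val_rev j
      omega
    obtain ⟨x, hxV, hxW, hx0⟩ := aux_inf_ne_bot V
      (Submodule.span ℝ (⇑hGh.eigenvectorBasis '' ↑s')) (by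
        rw [finrank_euclideanSpace, Fintype.card_fin]
        have hj := j.is_lt
        omega)
    have hlow : |hGh.eigenvalues (τ j.rev)| * ‖x‖ ≤ ‖TG x‖ := by
      refine aux_lower TG hGh.eigenvectorBasis.orthonormal hGeig s' (abs_nonneg _) ?_ hxW
      intro i hi
      rw [hs'def] at hi
      simp only [Finset.mem_image, Finset.mem_filter, Finset.mem_univ, true_and] at hi
      obtain ⟨k, hk, rfl⟩ := hi
      exact hτmono (by rw [Fin.le_def]; exact hk)
    have hup := hVb x hxV
    have hxpos : 0 < ‖x‖ := norm_pos_iff.mpr hx0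
    exact le_of_mul_le_mul_right (le_trans hlow hup) hxpos
  -- final assembly
  have hGdet : |G.det| ≤ ∏ j ∈ Finset.univ.filter (fun j : Fin N => (j : ℕ) < d),
      (1 + μ / |h1.eigenvalues (σ j)|) := by
    have h0 : |G.det| = ∏ i, |hGh.eigenvalues i| := by
      rw [hGh.det_eq_prod_eigenvalues, Finset.abs_prod]
      simp
    have h1' : (∏ i, |hGh.eigenvalues i|) = ∏ k, |hGh.eigenvalues (τ k)| :=
      (Equiv.prod_comp τ fun i => |hGh.eigenvalues i|).symm
    have h2' : (∏ k, |hGh.eigenvalues (τ k)|) = ∏ j : Fin N, |hGh.eigenvalues (τ j.rev)| := by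
      rw [← Equiv.prod_comp (Fin.revPerm) (fun k => |hGh.eigenvalues (τ k)|)]
      rfl
    have h3' : (∏ j : Fin N, |hGh.eigenvalues (τ j.rev)|)
        ≤ ∏ j : Fin N, (if (j:ℕ) < r then 1 + μ / |h1.eigenvalues (σ j)| else 1) :=
      Finset.prod_le_prod (fun i _ => abs_nonneg _) (fun i _ => key i)
    have h4' : (∏ j : Fin N, (if (j:ℕ) < r then 1 + μ / |h1.eigenvalues (σ j)| else 1))
        = ∏ j ∈ Finset.univ.filter (fun j : Fin N => (j : ℕ) < r),
            (1 + μ / |h1.eigenvalues (σ j)|) :=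
      (Finset.prod_filter _ _).symm
    have h5' : (∏ j ∈ Finset.univ.filter (fun j : Fin N => (j : ℕ) < r),
          (1 + μ / |h1.eigenvalues (σ j)|))
        ≤ ∏ j ∈ Finset.univ.filter (fun j : Fin N => (j : ℕ) < d),
            (1 + μ / |h1.eigenvalues (σ j)|) := by
      apply aux_prod_mono
      · intro i hi
        simp only [Finset.mem_filter, Finset.mem_univ, true_and] at hi ⊢
        omega
      · intro i _
        exact le_add_of_nonneg_right (div_nonneg hμ0 (abs_nonneg _))
    calc |G.det| = ∏ i, |hGh.eigenvalues i| := h0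
      _ = ∏ k, |hGh.eigenvalues (τ k)| := h1'
      _ = ∏ j : Fin N, |hGh.eigenvalues (τ j.rev)| := h2'
      _ ≤ ∏ j : Fin N, (if (j:ℕ) < r then 1 + μ / |h1.eigenvalues (σ j)| else 1) := h3'
      _ = ∏ j ∈ Finset.univ.filter (fun j : Fin N => (j : ℕ) < r),
            (1 + μ / |h1.eigenvalues (σ j)|) := h4'
      _ ≤ _ := h5'
  calc |(C₁ + C₂).det| = |C₁.det| * |G.det| := hdet_main
    _ ≤ _ := mul_le_mul_of_nonneg_left hGdet (abs_nonneg _)
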